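/- Let η_star, η_plus ≥ 0 and suppose there exist constants C_stb, C_rel', γ > 0 and a quantity d ≥ 0 (playing the role of ‖U₊ − U_*‖) such that: (i) stability |η₊(S) − η_*(S)| ≤ C_stb·d for the common part S, (ii) reduction η₊(R')² ≤ q_red·η_*(R)² + C_red²·d² on refined parts with 0 < q_red < 1, where η_*² = η_*(S)² + η_*(R)² and η₊² = η₊(S)² + η₊(R')², and (iii) d ≤ C_rel·γ^{-1}·η_*(R). Then for every 0 < θ < θ_opt := (1 + C_stb²C_rel²/γ²)^{-1} there exists 0 < κ_opt < 1 such that η₊ ≤ κ_opt·η_* implies θ·η_*² ≤ η_*(R)². -/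

import Mathlib

/-- Abstract optimality of the Dörfler marking (Lemma 4.6). -/
theorem stmt18 (ηS ηR ηpS ηpR d ηstar ηplus : ℝ)
    (hηS : 0 ≤ ηS) (hηR : 0 ≤ ηR) (hηpS : 0 ≤ ηpS) (hηpR : 0 ≤ ηpR)
    (hd : 0 ≤ d) (hηstar : 0 ≤ ηstar) (hηplus : 0 ≤ ηplus)
    (hstar : ηstar ^ 2 = ηS ^ 2 + ηR ^ 2)
    (hplus : ηplus ^ 2 = ηpS ^ 2 + ηpR ^ 2)
    (Cstb Crel γ Cred qred : ℝ)
    (hCstb : 0 < Cstb) (hCrel : 0 < Crel) (hγ : 0 < γ) (hCred : 0 < Cred)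
    (hqred0 : 0 < qred) (hqred1 : qred < 1)
    (hstb : |ηpS - ηS| ≤ Cstb * d)
    (hred : ηpR ^ 2 ≤ qred * ηR ^ 2 + Cred ^ 2 * d ^ 2)
    (hdrel : d ≤ Crel * γ⁻¹ * ηR) :
    ∀ θ : ℝ, 0 < θ → θ < (1 + Cstb ^ 2 * Crel ^ 2 / γ ^ 2)⁻¹ →
      ∃ κ : ℝ, 0 < κ ∧ κ < 1 ∧ (ηplus ≤ κ * ηstar → θ * ηstar ^ 2 ≤ ηR ^ 2) := by
  intro θ hθ0 hθ
  set Λ : ℝ := Cstb ^ 2 * Crel ^ 2 / γ ^ 2 with hΛdef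
  have hΛ : 0 < Λ := by positivity
  have h1Λ : (0:ℝ) < 1 + Λ := by linarith
  have hθΛ : θ * (1 + Λ) < 1 := by
    have := mul_lt_mul_of_pos_right hθ h1Λ
    rwa [inv_mul_cancel₀ (ne_of_gt h1Λ)] at this
  set ε : ℝ := 1 - θ * (1 + Λ) with hεdef
  have hε : 0 < ε := by linarith
  have hε1 : ε < 1 := by
    have := mul_pos hθ0 h1Λ
    linarith
  set δ : ℝ := 2 * θ * Λ / ε + 1 with hδdef
  have hδ : 0 < δ := by positivity
  have hδineq : θ * Λ / δ ≤ ε / 2 := by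
    rw [div_le_iff₀ hδ]
    have h1 : ε / 2 * δ = θ * Λ + ε / 2 := by
      rw [hδdef]; field_simp
    linarith
  set s : ℝ := Real.sqrt (ε / (2 * (1 + δ))) with hsdef
  have hs : 0 < s := Real.sqrt_pos.mpr (by positivity)
  refine ⟨min (1/2) s, lt_min (by norm_num) hs,
    lt_of_le_of_lt (min_le_left _ _) (by norm_num), ?_⟩
  intro hle
  set κ : ℝ := min (1/2) s with hκdef
  have hκ0 : 0 ≤ κ := le_of_lt (lt_min (by norm_num) hs)
  have hκ2 : (1 + δ) * κ ^ 2 ≤ ε / 2 := by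
    have h1 : κ ^ 2 ≤ s ^ 2 := pow_le_pow_left₀ hκ0 (min_le_right _ _) 2
    have h2 : s ^ 2 = ε / (2 * (1 + δ)) := Real.sq_sqrt (by positivity)
    rw [h2] at h1
    calc (1 + δ) * κ ^ 2 ≤ (1 + δ) * (ε / (2 * (1 + δ))) :=
          mul_le_mul_of_nonneg_left h1 (by positivity)
      _ = ε / 2 := by field_simp
  clear_value κ s δ ε Λ
  -- step 1 : ηplus² ≤ κ²·ηstar²  and hence  ηpS² ≤ κ²·ηstar²
  have hplus2 : ηplus ^ 2 ≤ κ ^ 2 * ηstar ^ 2 := by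
    rw [← mul_pow]
    exact pow_le_pow_left₀ hηplus hle 2
  have hpS2 : ηpS ^ 2 ≤ κ ^ 2 * ηstar ^ 2 := by
    have := sq_nonneg ηpR
    linarith
  -- step 2 : Young's inequality for the stability estimate
  have hS2 : ηS ^ 2 ≤ (1 + δ) * ηpS ^ 2 + (1 + 1/δ) * (Cstb * d) ^ 2 := by
    have habs : ηS ≤ ηpS + Cstb * d := by
      have := abs_le.mp hstb
      linarith [this.1]
    have h1 : ηS ^ 2 ≤ (ηpS + Cstb * d) ^ 2 := pow_le_pow_left₀ hηS habs 2
    have hkey : δ * ((1 + δ) * ηpS ^ 2 + (1 + 1/δ) * (Cstb * d) ^ 2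
        - (ηpS + Cstb * d) ^ 2) = (δ * ηpS - Cstb * d) ^ 2 := by
      field_simp; ring
    have h2 : 0 ≤ δ * ((1 + δ) * ηpS ^ 2 + (1 + 1/δ) * (Cstb * d) ^ 2
        - (ηpS + Cstb * d) ^ 2) := hkey ▸ sq_nonneg _
    have h3 : 0 ≤ (1 + δ) * ηpS ^ 2 + (1 + 1/δ) * (Cstb * d) ^ 2
        - (ηpS + Cstb * d) ^ 2 := nonneg_of_mul_nonneg_right h2 hδ
    linarith
  -- step 3 : reliability bound
  have hd2 : (Cstb * d) ^ 2 ≤ Λ * ηR ^ 2 := by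
    have h1 : d ^ 2 ≤ (Crel * γ⁻¹ * ηR) ^ 2 := pow_le_pow_left₀ hd hdrel 2
    have h2 : Λ * ηR ^ 2 = Cstb ^ 2 * (Crel * γ⁻¹ * ηR) ^ 2 := by
      rw [hΛdef]; field_simp
    have h3 := mul_le_mul_of_nonneg_left h1 (sq_nonneg Cstb)
    calc (Cstb * d) ^ 2 = Cstb ^ 2 * d ^ 2 := by ring
      _ ≤ Cstb ^ 2 * (Crel * γ⁻¹ * ηR) ^ 2 := h3
      _ = Λ * ηR ^ 2 := h2.symm
  -- combine everything
  have ha := mul_le_mul_of_nonneg_left hpS2 (by positivity : (0:ℝ) ≤ 1 + δ)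
  have hb := mul_le_mul_of_nonneg_left hd2 (by positivity : (0:ℝ) ≤ 1 + 1/δ)
  set C : ℝ := (1 + 1/δ) * Λ + 1 with hCdef
  have hC : 0 < C := by positivity
  have hCeq : C * ηR ^ 2 = (1 + 1/δ) * (Λ * ηR ^ 2) + ηR ^ 2 := by
    rw [hCdef]; ring
  have hassoc : (1 + δ) * (κ ^ 2 * ηstar ^ 2) = ((1 + δ) * κ ^ 2) * ηstar ^ 2 := by
    ring
  have hk : ((1 + δ) * κ ^ 2) * ηstar ^ 2 ≤ (ε / 2) * ηstar ^ 2 :=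
    mul_le_mul_of_nonneg_right hκ2 (sq_nonneg _)
  have hstep : (1 - ε / 2) * ηstar ^ 2 ≤ C * ηR ^ 2 := by
    linarith [ha, hb, hS2, hstar, hCeq, hassoc, hk]
  have hθC : θ * C ≤ 1 - ε / 2 := by
    have h1 : θ * C = θ * (1 + Λ) + θ * Λ / δ := by
      rw [hCdef]; field_simp; ring
    linarith
  have h1 : θ * ((1 - ε / 2) * ηstar ^ 2) ≤ θ * (C * ηR ^ 2) :=
    mul_le_mul_of_nonneg_left hstep (le_of_lt hθ0)
  have h2 : (θ * C) * ηR ^ 2 ≤ (1 - ε / 2) * ηR ^ 2 :=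
    mul_le_mul_of_nonneg_right hθC (sq_nonneg _)
  have h3 : (1 - ε / 2) * (θ * ηstar ^ 2) ≤ (1 - ε / 2) * ηR ^ 2 := by
    linarith [h1, h2]
  exact le_of_mul_le_mul_left h3 (by linarith : (0:ℝ) < 1 - ε / 2)
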